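/- Fix i ≥ 1 and a collection of nonnegative integers (d_{j,p})_{p ≤ j ≤ i+1}. In the field C(t_1,…,t_n, v, z), define a_j(z) := Π_{p ≤ j} (1 − z^{−1} t_p^2 v^{−2 d_{j,p}}) and φ_i(z) := t_{i+1}^{−1} t_i v^{d_{i+1} − 2 d_i + d_{i−1} − 1} · a_{i+1}(z v^{−i−2}) a_{i−1}(z v^{−i}) / (a_i(z v^{−i−2}) a_i(z v^{−i})), where d_j := Σ_{p ≤ j} d_{j,p}. Let (d'_{j,p}) be obtained from (d_{j,p}) by replacing d_{i,p_0} by d_{i,p_0} + 1 for a single index p_0 ≤ i, and let φ'_i(z) be defined by the same formula from (d'_{j,p}). Then φ'_i(z)/φ_i(z) = v^{−2} · (1 − z^{−1} v^{i+2} t_{p_0}^2 v^{−2 d_{i,p_0}}) / (1 − z^{−1} v^{i−2} t_{p_0}^2 v^{−2 d_{i,p_0}}). -/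

import Mathlib

variable {F : Type*} [Field F]

/-- `a_j(w) = Π_{p ≤ j} (1 − w⁻¹ t_p² v^{−2 d_{j,p}})`. -/
noncomputable def aSer (t : ℕ → F) (v : F) (d : ℕ → ℕ → ℕ) (j : ℕ) (w : F) : F :=
  ∏ p ∈ Finset.Icc 1 j, (1 - w⁻¹ * t p ^ 2 * v ^ (-2 * (d j p : ℤ)))

/-- `d_j = Σ_{p ≤ j} d_{j,p}`. -/
def dSum (d : ℕ → ℕ → ℕ) (j : ℕ) : ℕ := ∑ p ∈ Finset.Icc 1 j, d j p

/-- `φ_i(z) = t_{i+1}⁻¹ t_i v^{d_{i+1} − 2d_i + d_{i−1} − 1}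
  a_{i+1}(z v^{−i−2}) a_{i−1}(z v^{−i}) / (a_i(z v^{−i−2}) a_i(z v^{−i}))`. -/
noncomputable def phiSer (t : ℕ → F) (v z : F) (d : ℕ → ℕ → ℕ) (i : ℕ) : F :=
  (t (i + 1))⁻¹ * t i *
    v ^ ((dSum d (i + 1) : ℤ) - 2 * (dSum d i : ℤ) + (dSum d (i - 1) : ℤ) - 1) *
    aSer t v d (i + 1) (z * v ^ (-(i : ℤ) - 2)) * aSer t v d (i - 1) (z * v ^ (-(i : ℤ))) /
    (aSer t v d i (z * v ^ (-(i : ℤ) - 2)) * aSer t v d i (z * v ^ (-(i : ℤ)))) 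

private lemma factor_rw (t : ℕ → F) (v z : F) (hv : v ≠ 0) (p : ℕ) (e f : ℤ) :
    (1 : F) - (z * v ^ e)⁻¹ * t p ^ 2 * v ^ f = 1 - z⁻¹ * t p ^ 2 * v ^ (f - e) := by
  rw [mul_inv, ← zpow_neg, zpow_sub₀ hv, div_eq_mul_inv, ← zpow_neg]
  ring

private lemma final_alg (q ti P u A B x1 x2 x3 r1 r2 : F)
    (hx1 : x1 ≠ 0) (hx2 : x2 ≠ 0) (hx3 : x3 ≠ 0) (hr1 : r1 ≠ 0) (hr2 : r2 ≠ 0) :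
    q * ti * (P * u) * A * B / ((x2 * r1) * (x3 * r2)) =
      u * x1 / x3 * (q * ti * P * A * B / ((x1 * r1) * (x2 * r2))) := by
  field_simp

/-- Recursion (2.3): incrementing `d_{i,p₀}` multiplies the Cartan eigenvalue
`φ_i(z)` by `v^{−2}(1 − z⁻¹v^{i+2}t_{p₀}²v^{−2d_{i,p₀}})/(1 − z⁻¹v^{i−2}t_{p₀}²v^{−2d_{i,p₀}})`. -/
theorem phi_recursion_same_row
    (t : ℕ → F) (v z : F) (d : ℕ → ℕ → ℕ) (i p₀ : ℕ)
    (hi : 1 ≤ i) (hp₀ : 1 ≤ p₀) (hp₀i : p₀ ≤ i)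
    (hv : v ≠ 0) (hz : z ≠ 0) (ht : ∀ p, t p ≠ 0)
    (hfac : ∀ (p : ℕ) (e : ℤ), (1 : F) - z⁻¹ * t p ^ 2 * v ^ e ≠ 0)
    (d' : ℕ → ℕ → ℕ)
    (hd' : ∀ j p, d' j p = if j = i ∧ p = p₀ then d j p + 1 else d j p) :
    phiSer t v z d' i =
      v ^ (-2 : ℤ) *
        (1 - z⁻¹ * v ^ ((i : ℤ) + 2) * t p₀ ^ 2 * v ^ (-2 * (d i p₀ : ℤ))) /
        (1 - z⁻¹ * v ^ ((i : ℤ) - 2) * t p₀ ^ 2 * v ^ (-2 * (d i p₀ : ℤ))) *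
        phiSer t v z d i := by
  have hmem : p₀ ∈ Finset.Icc 1 i := Finset.mem_Icc.mpr ⟨hp₀, hp₀i⟩
  set X : ℤ → F := fun e => 1 - z⁻¹ * t p₀ ^ 2 * v ^ e with hX
  have hXne : ∀ e : ℤ, X e ≠ 0 := fun e => hfac p₀ e
  have hd'ne : ∀ j, j ≠ i → ∀ p, d' j p = d j p := by
    intro j hj p; rw [hd']; simp [hj]
  have hd'i : ∀ p, p ≠ p₀ → d' i p = d i p := by
    intro p hp; rw [hd']; simp [hp]
  have hd'ip₀ : d' i p₀ = d i p₀ + 1 := by rw [hd']; simp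
  have hS : ∀ j, j ≠ i → dSum d' j = dSum d j := fun j hj =>
    Finset.sum_congr rfl fun p _ => hd'ne j hj p
  have hSi : dSum d' i = dSum d i + 1 := by
    unfold dSum
    have h1 : ∀ p ∈ Finset.Icc 1 i, d' i p = d i p + (if p = p₀ then 1 else 0) := by
      intro p _
      by_cases hp : p = p₀
      · subst hp; simp [hd'ip₀]
      · simp [hd'i p hp, hp]
    rw [Finset.sum_congr rfl h1, Finset.sum_add_distrib,
      Finset.sum_ite_eq' (Finset.Icc 1 i) p₀ (fun _ => 1)]
    simp [hmem]
  have hA : ∀ (j : ℕ), j ≠ i → ∀ w : F, aSer t v d' j w = aSer t v d j w := by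
    intro j hj w
    exact Finset.prod_congr rfl fun p _ => by rw [hd'ne j hj p]
  have hsplit : ∀ (dd : ℕ → ℕ → ℕ) (w : F),
      aSer t v dd i w = (1 - w⁻¹ * t p₀ ^ 2 * v ^ (-2 * (dd i p₀ : ℤ))) *
        ∏ p ∈ (Finset.Icc 1 i).erase p₀, (1 - w⁻¹ * t p ^ 2 * v ^ (-2 * (dd i p : ℤ))) :=
    fun dd w => (Finset.mul_prod_erase _ _ hmem).symm
  have herase : ∀ w : F,
      (∏ p ∈ (Finset.Icc 1 i).erase p₀, (1 - w⁻¹ * t p ^ 2 * v ^ (-2 * (d' i p : ℤ)))) =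
      ∏ p ∈ (Finset.Icc 1 i).erase p₀, (1 - w⁻¹ * t p ^ 2 * v ^ (-2 * (d i p : ℤ))) := by
    intro w
    exact Finset.prod_congr rfl fun p hp => by
      rw [hd'i p (Finset.mem_erase.mp hp).1]
  simp only [phiSer]
  set w₁ : F := z * v ^ (-(i : ℤ) - 2) with hw₁
  set w₂ : F := z * v ^ (-(i : ℤ)) with hw₂
  set R₁ : F := ∏ p ∈ (Finset.Icc 1 i).erase p₀,
      (1 - w₁⁻¹ * t p ^ 2 * v ^ (-2 * (d i p : ℤ))) with hR₁
  set R₂ : F := ∏ p ∈ (Finset.Icc 1 i).erase p₀,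
      (1 - w₂⁻¹ * t p ^ 2 * v ^ (-2 * (d i p : ℤ))) with hR₂
  have hR₁ne : R₁ ≠ 0 := by
    rw [hR₁]
    refine Finset.prod_ne_zero_iff.mpr fun p _ => ?_
    rw [hw₁, factor_rw t v z hv]
    exact hfac p _
  have hR₂ne : R₂ ≠ 0 := by
    rw [hR₂]
    refine Finset.prod_ne_zero_iff.mpr fun p _ => ?_
    rw [hw₂, factor_rw t v z hv]
    exact hfac p _
  have hF1 : (1 : F) - w₁⁻¹ * t p₀ ^ 2 * v ^ (-2 * (d i p₀ : ℤ)) =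
      X ((i : ℤ) + 2 - 2 * (d i p₀ : ℤ)) := by
    rw [hw₁, factor_rw t v z hv,
      show (-2 * (d i p₀ : ℤ) - (-(i : ℤ) - 2)) = (i : ℤ) + 2 - 2 * (d i p₀ : ℤ) from by ring]
  have hF2 : (1 : F) - w₂⁻¹ * t p₀ ^ 2 * v ^ (-2 * (d i p₀ : ℤ)) =
      X ((i : ℤ) - 2 * (d i p₀ : ℤ)) := by
    rw [hw₂, factor_rw t v z hv,
      show (-2 * (d i p₀ : ℤ) - (-(i : ℤ))) = (i : ℤ) - 2 * (d i p₀ : ℤ) from by ring]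
  have hF1' : (1 : F) - w₁⁻¹ * t p₀ ^ 2 * v ^ (-2 * (d' i p₀ : ℤ)) =
      X ((i : ℤ) - 2 * (d i p₀ : ℤ)) := by
    rw [hw₁, factor_rw t v z hv, hd'ip₀,
      show (-2 * ((d i p₀ + 1 : ℕ) : ℤ) - (-(i : ℤ) - 2)) = (i : ℤ) - 2 * (d i p₀ : ℤ) from by
        push_cast; ring]
  have hF2' : (1 : F) - w₂⁻¹ * t p₀ ^ 2 * v ^ (-2 * (d' i p₀ : ℤ)) =
      X ((i : ℤ) - 2 - 2 * (d i p₀ : ℤ)) := by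
    rw [hw₂, factor_rw t v z hv, hd'ip₀,
      show (-2 * ((d i p₀ + 1 : ℕ) : ℤ) - (-(i : ℤ))) = (i : ℤ) - 2 - 2 * (d i p₀ : ℤ) from by
        push_cast; ring]
  have hAi1 : aSer t v d i w₁ = X ((i : ℤ) + 2 - 2 * (d i p₀ : ℤ)) * R₁ := by
    rw [hsplit d w₁, hF1]
  have hAi2 : aSer t v d i w₂ = X ((i : ℤ) - 2 * (d i p₀ : ℤ)) * R₂ := by
    rw [hsplit d w₂, hF2]
  have hAi1' : aSer t v d' i w₁ = X ((i : ℤ) - 2 * (d i p₀ : ℤ)) * R₁ := by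
    rw [hsplit d' w₁, herase w₁, hF1']
  have hAi2' : aSer t v d' i w₂ = X ((i : ℤ) - 2 - 2 * (d i p₀ : ℤ)) * R₂ := by
    rw [hsplit d' w₂, herase w₂, hF2']
  have key : ∀ a b : ℤ, z⁻¹ * v ^ a * t p₀ ^ 2 * v ^ b = z⁻¹ * t p₀ ^ 2 * v ^ (a + b) := by
    intro a b; rw [zpow_add₀ hv]; ring
  have hN : (1 : F) - z⁻¹ * v ^ ((i : ℤ) + 2) * t p₀ ^ 2 * v ^ (-2 * (d i p₀ : ℤ)) =
      X ((i : ℤ) + 2 - 2 * (d i p₀ : ℤ)) := by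
    simp only [hX]
    rw [key, show ((i : ℤ) + 2) + (-2 * (d i p₀ : ℤ)) = (i : ℤ) + 2 - 2 * (d i p₀ : ℤ) from
      by ring]
  have hDen : (1 : F) - z⁻¹ * v ^ ((i : ℤ) - 2) * t p₀ ^ 2 * v ^ (-2 * (d i p₀ : ℤ)) =
      X ((i : ℤ) - 2 - 2 * (d i p₀ : ℤ)) := by
    simp only [hX]
    rw [key, show ((i : ℤ) - 2) + (-2 * (d i p₀ : ℤ)) = (i : ℤ) - 2 - 2 * (d i p₀ : ℤ) from
      by ring]
  have hE : ((dSum d' (i + 1) : ℤ) - 2 * (dSum d' i : ℤ) + (dSum d' (i - 1) : ℤ) - 1) =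
      ((dSum d (i + 1) : ℤ) - 2 * (dSum d i : ℤ) + (dSum d (i - 1) : ℤ) - 1) + (-2) := by
    rw [hS (i + 1) (by omega), hS (i - 1) (by omega), hSi]
    push_cast
    ring
  rw [hA (i + 1) (by omega) w₁, hA (i - 1) (by omega) w₂, hAi1, hAi2, hAi1', hAi2',
    hN, hDen, hE, zpow_add₀ hv]
  exact final_alg _ _ _ _ _ _ _ _ _ _ _ (hXne _) (hXne _) (hXne _) hR₁ne hR₂ne
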